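/- arXiv:1309.0725 — 3 statements merged into one kernel-verified Lean document; each statement's English description precedes it below -/
import Mathlib

section
/- Let n ≥ 2 and let Q_n = conv(C_{n-1} × {0} ∪ {e_n, -e_n}) ⊂ ℝ^n be the bipyramid over the (n-1)-dimensional cube. Then the linear Ehrhart coefficient of Q_n is given by ℓ_1(Q_n) = 2(n-1) + (4 - 2^n) · B_{n-1}, where B_j denotes the j-th Bernoulli number. -/
open MeasureTheory Polynomial Pointwise

/-- The number of integer lattice points contained in a subset of `ℝ^n`. -/
noncomputable def latticePointCount {n : ℕ} (S : Set (Fin n → ℝ)) : ℕ :=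
  {v : Fin n → ℤ | (fun i => (v i : ℝ)) ∈ S}.ncard

/-- A lattice polytope in `ℝ^n`: the convex hull of finitely many integer points. -/
def IsLatticePolytope {n : ℕ} (P : Set (Fin n → ℝ)) : Prop :=
  ∃ V : Finset (Fin n → ℤ),
    P = convexHull ℝ ((fun v : Fin n → ℤ => fun i => (v i : ℝ)) '' (V : Set (Fin n → ℤ)))

/-- `L` is the Ehrhart polynomial of `P`: for every positive integer `k` its value at `k`
is the number of lattice points of the dilate `kP`. -/
def IsEhrhartPoly {n : ℕ} (P : Set (Fin n → ℝ)) (L : Polynomial ℝ) : Prop :=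
  ∀ k : ℕ, 0 < k → L.eval (k : ℝ) = latticePointCount ((k : ℝ) • P)

/-- The bipyramid `Q_n = conv(C_{n-1} × {0} ∪ {e_n, -e_n})` over the cube
`C_{n-1} = [-1,1]^{n-1}`, sitting in `ℝ^n` (here `n ≥ 2`). -/
noncomputable def bipyramidQ (n : ℕ) (hn : 2 ≤ n) : Set (Fin n → ℝ) :=
  convexHull ℝ
    ({x : Fin n → ℝ | (∀ i, |x i| ≤ 1) ∧ x ⟨n - 1, by omega⟩ = 0} ∪
     {Pi.single (⟨n - 1, by omega⟩ : Fin n) (1 : ℝ),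
      -Pi.single (⟨n - 1, by omega⟩ : Fin n) (1 : ℝ)})

section AuxPoly
open Finset


noncomputable def Epoly (m : ℕ) : Polynomial ℝ :=
  (∑ j ∈ range (m+1), C ((m.choose j : ℝ) * 2^j) * X^j)
  + ∑ i ∈ range (m+1),
      C (2 * (((_root_.bernoulli i : ℚ):ℝ) * ((m+1).choose i) / (m+1)) * (2^(m+1-i) - 2^m)) * X^(m+1-i)

lemma faulhaber_real (N m : ℕ) :
    (∑ j ∈ range N, (j:ℝ)^m) =
      ∑ i ∈ range (m+1), ((_root_.bernoulli i : ℚ):ℝ) * ((m+1).choose i) * (N:ℝ)^(m+1-i) / (m+1) := by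
  have := sum_range_pow N m
  have h2 : ((∑ k ∈ range N, (k:ℚ)^m : ℚ) : ℝ)
      = ((∑ i ∈ range (m+1), _root_.bernoulli i * ((m+1).choose i) * (N:ℚ)^(m+1-i)/(m+1) : ℚ) : ℝ) := by
    exact congrArg Rat.cast this
  push_cast at h2
  exact h2

lemma sum_odd_pow (m : ℕ) : ∀ k : ℕ, ∑ j ∈ range (2*k), j^m
    = ∑ j ∈ range k, (2*j+1)^m + 2^m * ∑ j ∈ range k, j^m := by
  intro k
  induction k with
  | zero => simp
  | succ k ih =>
    have h2 : 2*(k+1) = (2*k+1)+1 := by ring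
    rw [h2, Finset.sum_range_succ, Finset.sum_range_succ, ih,
      Finset.sum_range_succ, Finset.sum_range_succ]
    ring

lemma Epoly_eval (m k : ℕ) :
    (Epoly m).eval (k:ℝ) = (2*(k:ℝ)+1)^m + 2 * ∑ j ∈ range k, (2*(j:ℝ)+1)^m := by
  have hfk := faulhaber_real k m
  have hf2k := faulhaber_real (2*k) m
  have hodd : (∑ j ∈ range (2*k), (j:ℝ)^m)
      = ∑ j ∈ range k, (2*(j:ℝ)+1)^m + 2^m * ∑ j ∈ range k, (j:ℝ)^m := by
    have := sum_odd_pow m k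
    have h2 : ((∑ j ∈ range (2*k), j^m : ℕ):ℝ)
        = ((∑ j ∈ range k, (2*j+1)^m + 2^m * ∑ j ∈ range k, j^m : ℕ) : ℝ) := by
      exact congrArg (Nat.cast : ℕ → ℝ) this
    push_cast at h2
    exact h2
  have hbin : (2*(k:ℝ)+1)^m = ∑ j ∈ range (m+1), (m.choose j : ℝ) * 2^j * (k:ℝ)^j := by
    rw [add_pow]
    apply Finset.sum_congr rfl
    intro j hj
    rw [mul_pow]
    ring
  simp only [Epoly, eval_add, eval_finset_sum, eval_mul, eval_C, eval_pow, eval_X]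
  rw [← hbin]
  congr 1
  have key : ∑ i ∈ range (m+1),
      2 * (((_root_.bernoulli i : ℚ):ℝ) * ((m+1).choose i) / (m+1)) * (2^(m+1-i) - 2^m) * (k:ℝ)^(m+1-i)
      = 2 * ((∑ j ∈ range (2*k), (j:ℝ)^m) - 2^m * ∑ j ∈ range k, (j:ℝ)^m) := by
    rw [hf2k, hfk]
    simp only [Finset.mul_sum, ← Finset.sum_sub_distrib]
    apply Finset.sum_congr rfl
    intro i hi
    push_cast
    ring
  rw [key, hodd]
  ring

lemma Epoly_coeff (m : ℕ) (hm : 1 ≤ m) :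
    (Epoly m).coeff 1 = 2*(m:ℝ) + ((_root_.bernoulli m : ℚ):ℝ) * (4 - 2^(m+1)) := by
  simp only [Epoly, coeff_add, finset_sum_coeff, coeff_C_mul, coeff_X_pow]
  rw [Finset.sum_eq_single 1, Finset.sum_eq_single m]
  · simp only [Nat.add_sub_cancel, Nat.add_sub_cancel_left, if_pos rfl, eq_self_iff_true, if_true]
    rw [Nat.choose_one_right, Nat.choose_succ_self_right]
    have hne : ((m:ℝ)+1) ≠ 0 := by positivity
    field_simp
    push_cast
    ring
  · intro i hi hne
    have : m + 1 - i ≠ 1 := by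
      simp at hi; omega
    simp [this, if_neg (Ne.symm this)]
  · intro h; exact absurd (Finset.self_mem_range_succ m) h
  · intro j hj hne
    simp [if_neg (Ne.symm hne)]
  · intro h
    exact absurd (Finset.mem_range.2 (by omega)) h


lemma sum_Icc_natAbs (h : ℕ → ℕ) : ∀ k : ℕ,
    ∑ t ∈ Finset.Icc (-(k:ℤ)) k, h t.natAbs = h 0 + 2 * ∑ j ∈ Finset.Icc 1 k, h j := by
  intro k
  induction k with
  | zero => simp
  | succ k ih =>
    have hIcc : Finset.Icc (-((k:ℤ)+1)) ((k:ℤ)+1)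
        = insert (-((k:ℤ)+1)) (insert ((k:ℤ)+1) (Finset.Icc (-(k:ℤ)) k)) := by
      ext t; simp; omega
    have h1 : (-((k:ℤ)+1)) ∉ insert ((k:ℤ)+1) (Finset.Icc (-(k:ℤ)) (k:ℤ)) := by
      simp; omega
    have h2 : ((k:ℤ)+1) ∉ Finset.Icc (-(k:ℤ)) (k:ℤ) := by simp
    push_cast
    rw [hIcc, Finset.sum_insert h1, Finset.sum_insert h2, ih,
      Finset.sum_Icc_succ_top (by omega : 1 ≤ k+1)]
    have : ((-((k:ℤ)+1)).natAbs) = k+1 := by omega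
    rw [this]
    have : ((((k:ℤ))+1).natAbs) = k+1 := by omega
    rw [this]
    ring

end AuxPoly

lemma bipyramid_eq (n : ℕ) (hn : 2 ≤ n) :
    bipyramidQ n hn = {x : Fin n → ℝ | |x ⟨n - 1, by omega⟩| ≤ 1 ∧
      ∀ i, i ≠ (⟨n - 1, by omega⟩ : Fin n) → |x i| + |x ⟨n - 1, by omega⟩| ≤ 1} := by
  set l : Fin n := ⟨n - 1, by omega⟩ with hl
  set G : Set (Fin n → ℝ) :=
    ({x : Fin n → ℝ | (∀ i, |x i| ≤ 1) ∧ x l = 0} ∪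
     {Pi.single l (1 : ℝ), -Pi.single l (1 : ℝ)}) with hG
  have hQ : bipyramidQ n hn = convexHull ℝ G := rfl
  rw [hQ]
  apply Set.Subset.antisymm
  · apply convexHull_min
    · rintro x (⟨hx1, hx2⟩ | hx)
      · refine ⟨by rw [hx2]; simp, fun i hi => ?_⟩
        rw [hx2]; simpa using hx1 i
      · rcases hx with rfl | rfl
        · refine ⟨by simp, fun i hi => ?_⟩
          simp [Pi.single_eq_of_ne hi]
        · refine ⟨by simp, fun i hi => ?_⟩
          simp [Pi.single_eq_of_ne hi]
    · intro x hx y hy a b ha hb hab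
      obtain ⟨hx1, hx2⟩ := hx
      obtain ⟨hy1, hy2⟩ := hy
      have key : ∀ i : Fin n, |(a • x + b • y) i| ≤ a * |x i| + b * |y i| := by
        intro i
        have : (a • x + b • y) i = a * x i + b * y i := rfl
        rw [this]
        calc |a * x i + b * y i| ≤ |a * x i| + |b * y i| := abs_add_le _ _
          _ = a * |x i| + b * |y i| := by
              rw [abs_mul, abs_mul, abs_of_nonneg ha, abs_of_nonneg hb]
      refine ⟨?_, fun i hi => ?_⟩
      · have := key l; nlinarith [hx1, hy1]
      · have h1 := key i
        have h2 := key l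
        have h3 := hx2 i hi
        have h4 := hy2 i hi
        nlinarith
  · rintro x ⟨h1, h2⟩
    set t := x l with ht
    have ht1 : t ≤ 1 := (abs_le.1 h1).2
    have ht1' : -1 ≤ t := (abs_le.1 h1).1
    have hsub : G ⊆ convexHull ℝ G := subset_convexHull ℝ G
    have heG : Pi.single l (1:ℝ) ∈ G := Or.inr (Or.inl rfl)
    have hneG : -Pi.single l (1:ℝ) ∈ G := Or.inr (Or.inr rfl)
    rcases le_or_gt 0 t with hpos | hneg
    · rcases eq_or_lt_of_le ht1 with heq | hlt
      · have hx : x = Pi.single l (1:ℝ) := by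
          funext i
          by_cases hi : i = l
          · subst hi; rw [← ht, ← heq]; simp
          · have := h2 i hi
            rw [heq] at this
            have hxi : |x i| ≤ 0 := by simpa using this
            have : x i = 0 := abs_nonpos_iff.mp hxi
            rw [this, Pi.single_eq_of_ne hi]
        rw [hx]; exact hsub heG
      · set y : Fin n → ℝ := fun i => if i = l then 0 else x i / (1 - t) with hy
        have hden : (0:ℝ) < 1 - t := by linarith
        have hyG : y ∈ G := by
          left
          refine ⟨fun i => ?_, by simp [hy]⟩
          by_cases hi : i = l
          · simp [hy, hi]
          · simp only [hy, if_neg hi]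
            rw [abs_div, div_le_one (by rwa [abs_of_pos hden])]
            rw [abs_of_pos hden]
            have := h2 i hi
            rw [abs_of_nonneg hpos] at this
            linarith
        have hx : x = (1 - t) • y + t • (Pi.single l (1:ℝ) : Fin n → ℝ) := by
          funext i
          by_cases hi : i = l
          · subst hi
            simp only [Pi.add_apply, Pi.smul_apply, smul_eq_mul, hy,
              Pi.single_eq_same, if_pos rfl, ite_true, eq_self_iff_true]
            ring_nf
            exact ht.symm
          · simp only [Pi.add_apply, Pi.smul_apply, smul_eq_mul, hy, if_neg hi,
              Pi.single_eq_of_ne hi]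
            field_simp
            ring
        rw [hx]
        exact (convex_convexHull ℝ G) (hsub hyG) (hsub heG) (by linarith) hpos (by ring)
    · rcases eq_or_lt_of_le ht1' with heq | hlt
      · have hx : x = -Pi.single l (1:ℝ) := by
          funext i
          by_cases hi : i = l
          · subst hi; rw [← ht, ← heq]; simp
          · have := h2 i hi
            rw [← heq] at this
            have hxi : |x i| ≤ 0 := by simpa using this
            have : x i = 0 := abs_nonpos_iff.mp hxi
            rw [this]
            simp [Pi.neg_apply, Pi.single_eq_of_ne hi]
        rw [hx]; exact hsub hneG
      · set y : Fin n → ℝ := fun i => if i = l then 0 else x i / (1 + t) with hy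
        have hden : (0:ℝ) < 1 + t := by linarith
        have hyG : y ∈ G := by
          left
          refine ⟨fun i => ?_, by simp [hy]⟩
          by_cases hi : i = l
          · simp [hy, hi]
          · simp only [hy, if_neg hi]
            rw [abs_div, div_le_one (by rwa [abs_of_pos hden])]
            rw [abs_of_pos hden]
            have := h2 i hi
            rw [abs_of_neg hneg] at this
            linarith
        have hx : x = (1 + t) • y + (-t) • (-(Pi.single l (1:ℝ) : Fin n → ℝ)) := by
          funext i
          by_cases hi : i = l
          · subst hi
            simp only [Pi.add_apply, Pi.smul_apply, smul_eq_mul, Pi.neg_apply, hy,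
              Pi.single_eq_same, if_pos rfl, ite_true, eq_self_iff_true]
            ring_nf
            exact ht.symm
          · simp only [Pi.add_apply, Pi.smul_apply, smul_eq_mul, Pi.neg_apply, hy, if_neg hi,
              Pi.single_eq_of_ne hi]
            field_simp
            ring
        rw [hx]
        exact (convex_convexHull ℝ G) (hsub hyG) (hsub hneG) (by linarith) (by linarith)
          (by ring)


lemma bipyramid_count (n : ℕ) (hn : 2 ≤ n) (k : ℕ) (hk : 0 < k) :
    latticePointCount ((k : ℝ) • bipyramidQ n hn)
      = (2*k+1)^(n-1) + 2 * ∑ j ∈ Finset.range k, (2*j+1)^(n-1) := by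
  classical
  set l : Fin n := ⟨n - 1, by omega⟩ with hl
  set K : ℤ := (k : ℤ) with hK
  have hk0 : (0:ℝ) < (k:ℝ) := by exact_mod_cast hk
  have hdiv1 : ∀ A : ℝ, ((k:ℝ)⁻¹ * A ≤ 1 ↔ A ≤ (k:ℝ)) := by
    intro A
    rw [inv_mul_eq_div, div_le_one hk0]
  have hdiv2 : ∀ A B : ℝ, ((k:ℝ)⁻¹ * A + (k:ℝ)⁻¹ * B ≤ 1 ↔ A + B ≤ (k:ℝ)) := by
    intro A B
    have : (k:ℝ)⁻¹ * A + (k:ℝ)⁻¹ * B = (A + B) / k := by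
      field_simp
    rw [this, div_le_one hk0]
  have hcast : ∀ w : Fin n → ℤ, ∀ i : Fin n, |((w i : ℝ))| = (((w i).natAbs : ℕ) : ℝ) := by
    intro w i
    rw [Nat.cast_natAbs, Int.cast_abs]
  -- membership characterization
  have hmem : ∀ v : Fin n → ℤ, ((fun i => (v i : ℝ)) ∈ (k : ℝ) • bipyramidQ n hn)
      ↔ ((v l).natAbs ≤ k ∧ ∀ i, i ≠ l → (v i).natAbs + (v l).natAbs ≤ k) := by
    intro v
    rw [Set.mem_smul_set_iff_inv_smul_mem₀ (ne_of_gt hk0), bipyramid_eq n hn]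
    simp only [Set.mem_setOf_eq, Pi.smul_apply, smul_eq_mul, abs_mul, abs_inv,
      abs_of_pos hk0, hdiv1, hdiv2, hcast]
    constructor
    · rintro ⟨ha, hb⟩
      refine ⟨by exact_mod_cast ha, fun i hi => ?_⟩
      have := hb i hi
      exact_mod_cast this
    · rintro ⟨ha, hb⟩
      refine ⟨by exact_mod_cast ha, fun i hi => ?_⟩
      have := hb i hi
      exact_mod_cast this
  -- the finset of lattice points
  set F : Finset (Fin n → ℤ) :=
    Finset.filter (fun v : Fin n → ℤ => ∀ i, i ≠ l → (v i).natAbs + (v l).natAbs ≤ k)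
      (Finset.Icc (fun _ => -K) (fun _ => K)) with hF
  have hset : {v : Fin n → ℤ | (fun i => (v i : ℝ)) ∈ (k : ℝ) • bipyramidQ n hn} = ↑F := by
    ext v
    simp only [Set.mem_setOf_eq, hmem, hF, Finset.coe_filter, Finset.mem_Icc, Pi.le_def, hK]
    constructor
    · rintro ⟨ha, hb⟩
      refine ⟨⟨fun i => ?_, fun i => ?_⟩, hb⟩
      · by_cases hi : i = l
        · subst hi; omega
        · have := hb i hi; omega
      · by_cases hi : i = l
        · subst hi; omega
        · have := hb i hi; omega
    · rintro ⟨⟨ha, hb⟩, hc⟩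
      refine ⟨?_, hc⟩
      have h1 := ha l; have h2 := hb l
      omega
  rw [latticePointCount, hset, Set.ncard_coe_finset]
  -- fiberwise count
  have hfib : ∀ v ∈ F, v l ∈ Finset.Icc (-K) K := by
    intro v hv
    rw [hF, Finset.mem_filter, Finset.mem_Icc, Pi.le_def] at hv
    obtain ⟨⟨ha, hb⟩, _⟩ := hv
    rw [Finset.mem_Icc]
    exact ⟨ha l, hb l⟩
  rw [Finset.card_eq_sum_card_fiberwise hfib]
  have hcard : ∀ t ∈ Finset.Icc (-K) K,
      (Finset.filter (fun v => v l = t) F).card = (2*(k - t.natAbs)+1)^(n-1) := by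
    intro t ht
    rw [Finset.mem_Icc] at ht
    set c : ℤ := K - (t.natAbs : ℤ) with hc
    have htk : t.natAbs ≤ k := by rw [hK] at ht; omega
    have hc0 : 0 ≤ c := by rw [hc, hK]; omega
    have hfeq : Finset.filter (fun v => v l = t) F
        = Finset.Icc (fun i => if i = l then t else -c) (fun i => if i = l then t else c) := by
      ext v
      rw [Finset.mem_filter, hF, Finset.mem_filter, Finset.mem_Icc, Finset.mem_Icc,
        Pi.le_def, Pi.le_def]
      constructor
      · rintro ⟨⟨⟨ha, hb⟩, hcnd⟩, hvl⟩
        constructor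
        · intro i
          by_cases hi : i = l
          · subst hi; simp only [eq_self_iff_true, if_true]; omega
          · simp only [if_neg hi]
            have := hcnd i hi
            rw [hvl] at this
            rw [hc, hK]
            omega
        · intro i
          by_cases hi : i = l
          · subst hi; simp only [eq_self_iff_true, if_true]; omega
          · simp only [if_neg hi]
            have := hcnd i hi
            rw [hvl] at this
            rw [hc, hK]
            omega
      · rintro ⟨ha, hb⟩
        have hvl : v l = t := by
          have h1 := ha l; have h2 := hb l
          simp only [eq_self_iff_true, if_true] at h1 h2
          omega
        refine ⟨⟨⟨fun i => ?_, fun i => ?_⟩, fun i hi => ?_⟩, hvl⟩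
        · by_cases hi : i = l
          · subst hi; rw [hvl, hK]; omega
          · have := ha i; simp only [if_neg hi] at this
            rw [hc, hK] at this; rw [hK]; omega
        · by_cases hi : i = l
          · subst hi; rw [hvl, hK]; omega
          · have := hb i; simp only [if_neg hi] at this
            rw [hc, hK] at this; rw [hK]; omega
        · have h1 := ha i; have h2 := hb i
          simp only [if_neg hi] at h1 h2
          rw [hc, hK] at h1 h2
          rw [hvl]
          omega
    rw [hfeq, Pi.card_Icc]
    have hprod : ∀ i : Fin n,
        (Finset.Icc (if i = l then t else -c) (if i = l then t else c)).card
        = if i = l then 1 else (2*(k - t.natAbs)+1) := by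
      intro i
      by_cases hi : i = l
      · simp [hi, Int.card_Icc]
      · rw [if_neg hi, if_neg hi, if_neg hi, Int.card_Icc]
        have hval : c + 1 - (-c) = ((2*(k - t.natAbs)+1 : ℕ) : ℤ) := by
          rw [hc, hK]
          omega
        rw [hval, Int.toNat_natCast]
    calc ∏ i : Fin n, (Finset.Icc (if i = l then t else -c) (if i = l then t else c)).card
        = ∏ i : Fin n, (if i = l then 1 else (2*(k - t.natAbs)+1)) :=
          Finset.prod_congr rfl (fun i _ => hprod i)
      _ = (if l = l then 1 else (2*(k - t.natAbs)+1))
            * ∏ i ∈ Finset.univ.erase l, (if i = l then 1 else (2*(k - t.natAbs)+1)) :=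
          (Finset.mul_prod_erase Finset.univ _ (Finset.mem_univ l)).symm
      _ = ∏ i ∈ Finset.univ.erase l, (2*(k - t.natAbs)+1) := by
          rw [if_pos rfl, one_mul]
          exact Finset.prod_congr rfl (fun i hi => if_neg (Finset.ne_of_mem_erase hi))
      _ = (2*(k - t.natAbs)+1)^(n-1) := by
          rw [Finset.prod_const, Finset.card_erase_of_mem (Finset.mem_univ l),
            Finset.card_univ, Fintype.card_fin]
  rw [Finset.sum_congr rfl hcard]
  rw [hK, sum_Icc_natAbs (fun j => (2*(k - j)+1)^(n-1)) k]
  have hsum : ∑ j ∈ Finset.Icc 1 k, (2*(k-j)+1)^(n-1)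
      = ∑ j ∈ Finset.range k, (2*j+1)^(n-1) := by
    rw [← Finset.Ico_add_one_right_eq_Icc, Finset.sum_Ico_eq_sum_range]
    have hkk : k + 1 - 1 = k := by omega
    rw [hkk]
    rw [← Finset.sum_range_reflect (fun j => (2*j+1)^(n-1)) k]
    apply Finset.sum_congr rfl
    intro j hj
    rw [Finset.mem_range] at hj
    congr 2
    omega
  rw [hsum, Nat.sub_zero]

theorem bipyramid_linear_ehrhart_coeff (n : ℕ) (hn : 2 ≤ n)
    (L : Polynomial ℝ) (hL : IsEhrhartPoly (bipyramidQ n hn) L) :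
    L.coeff 1 = 2 * ((n : ℝ) - 1) + (4 - 2 ^ n) * ((bernoulli (n - 1) : ℚ) : ℝ) := by
  have hm : 1 ≤ n - 1 := by omega
  have hLE : L = Epoly (n-1) := by
    have hroot : ∀ k : ℕ, 0 < k → (L - Epoly (n-1)).IsRoot (k : ℝ) := by
      intro k hk
      have h1 := hL k hk
      have h2 := Epoly_eval (n-1) k
      have h3 := bipyramid_count n hn k hk
      rw [h3] at h1
      push_cast at h1
      rw [Polynomial.IsRoot, Polynomial.eval_sub, h1, h2]
      ring
    have hinf : { x : ℝ | (L - Epoly (n-1)).IsRoot x }.Infinite := by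
      have hinj : Function.Injective (fun k : ℕ => ((k+1 : ℕ) : ℝ)) := by
        intro a b hab
        simpa using hab
      exact Set.infinite_of_injective_forall_mem hinj
        (fun a => hroot (a+1) (Nat.succ_pos a))
    have := Polynomial.eq_zero_of_infinite_isRoot _ hinf
    exact sub_eq_zero.mp this
  rw [hLE, Epoly_coeff (n-1) hm]
  have h1 : ((n-1 : ℕ) : ℝ) = (n:ℝ) - 1 := by
    have h : (1:ℕ) ≤ n := by omega
    push_cast [h]
    ring
  have h2 : n - 1 + 1 = n := by omega
  rw [h1, h2]
  ring
end

section
/- Let a > 0 be a real number and let P ⊂ ℝ^n be an n-dimensional lattice polytope such that all n complex roots of its Ehrhart polynomial L_P have real part equal to -1/a. Then for all integers 0 ≤ s < t ≤ n, the Ehrhart coefficients satisfy ℓ_t(P)/ℓ_s(P) ≤ a^{t-s} · binom(n,t)/binom(n,s). -/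
open MeasureTheory Polynomial Pointwise

/-- A complex polynomial has "nonnegative real coefficients". -/
def NNCoeff (p : Polynomial ℂ) : Prop :=
  ∀ k, (p.coeff k).im = 0 ∧ 0 ≤ (p.coeff k).re

lemma nnCoeff_mul {p q : Polynomial ℂ} (hp : NNCoeff p) (hq : NNCoeff q) :
    NNCoeff (p * q) := by
  intro k
  rw [Polynomial.coeff_mul]
  constructor
  · rw [Complex.im_sum]
    refine Finset.sum_eq_zero fun x _ => ?_
    rw [Complex.mul_im, (hp x.1).1, (hq x.2).1]
    ring
  · rw [Complex.re_sum]
    refine Finset.sum_nonneg fun x _ => ?_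
    rw [Complex.mul_re, (hp x.1).1, (hq x.2).1]
    have := (hp x.1).2; have := (hq x.2).2
    nlinarith

lemma nnCoeff_prod (s : Multiset ℂ) (hstar : s.map (starRingEnd ℂ) = s)
    (hre : ∀ z ∈ s, z.re = 0) :
    NNCoeff ((s.map fun z => X - C z).prod) := by
  induction s using Multiset.strongInductionOn with
  | ih s ih =>
    rcases s.empty_or_exists_mem with h0 | ⟨z, hz⟩
    · subst h0
      intro k
      simp only [Multiset.map_zero, Multiset.prod_zero, Polynomial.coeff_one]
      split <;> simp
    · by_cases him : z.im = 0
      · -- then z = 0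
        have hz0 : z = 0 := Complex.ext (hre z hz) him
        subst hz0
        have hs : (0 : ℂ) ::ₘ s.erase 0 = s := Multiset.cons_erase hz
        have herase : NNCoeff (((s.erase 0).map fun z => X - C z).prod) := by
          refine ih _ (Multiset.erase_lt.2 hz) ?_ ?_
          · rw [Multiset.map_erase _ (RingHom.injective _) 0 s]
            rw [map_zero, hstar]
          · exact fun w hw => hre w (Multiset.mem_of_le (Multiset.erase_le _ _) hw)
        rw [← hs, Multiset.map_cons, Multiset.prod_cons]
        have hX : NNCoeff ((X : Polynomial ℂ) - C 0) := by
          intro k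
          simp only [map_zero, sub_zero, Polynomial.coeff_X]
          split <;> simp
        exact nnCoeff_mul hX herase
      · -- conjugate pair
        have hwz : starRingEnd ℂ z = -z := by
          apply Complex.ext <;> simp [hre z hz]
        have hw : -z ∈ s := by
          rw [← hstar]
          rw [← hwz]
          exact Multiset.mem_map_of_mem _ hz
        have hne : -z ≠ z := by
          intro h
          apply him
          have := congrArg Complex.im h
          simp at this
          linarith
        have hw' : -z ∈ s.erase z := (Multiset.mem_erase_of_ne hne).2 hw
        set t : Multiset ℂ := (s.erase z).erase (-z) with ht
        have hs : z ::ₘ (-z) ::ₘ t = s := by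
          rw [ht, Multiset.cons_erase hw', Multiset.cons_erase hz]
        have htle : t ≤ s :=
          le_trans (Multiset.erase_le _ _) (Multiset.erase_le _ _)
        have htlt : t < s :=
          lt_of_le_of_lt (Multiset.erase_le _ _) (Multiset.erase_lt.2 hz)
        have htstar : t.map (starRingEnd ℂ) = t := by
          rw [ht, Multiset.map_erase _ (RingHom.injective _), Multiset.map_erase _ (RingHom.injective _),
            hstar, hwz, Multiset.erase_comm]
          have : starRingEnd ℂ (-z) = z := by rw [map_neg, hwz, neg_neg]
          rw [this]
        have hquad : NNCoeff ((X - C z) * (X - C (-z))) := by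
          have hq : (X - C z) * (X - C (-z)) = X ^ 2 - C (z ^ 2) := by
            rw [map_neg, show (C (z ^ 2) : Polynomial ℂ) = C z ^ 2 from map_pow C z 2]; ring
          rw [hq]
          intro k
          have hz2re : (z ^ 2).re = -(z.im ^ 2) := by
            rw [sq, Complex.mul_re, hre z hz]; ring
          have hz2im : (z ^ 2).im = 0 := by
            rw [sq, Complex.mul_im, hre z hz]; ring
          simp only [Polynomial.coeff_sub, Polynomial.coeff_X_pow, Polynomial.coeff_C]
          split_ifs with h1 h2 <;>
            simp_all [Complex.sub_re, Complex.sub_im, sq_nonneg]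
        have hrest : NNCoeff ((t.map fun z => X - C z).prod) :=
          ih t htlt htstar fun w hw => hre w (Multiset.mem_of_le htle hw)
        rw [← hs, Multiset.map_cons, Multiset.map_cons, Multiset.prod_cons,
          Multiset.prod_cons, ← mul_assoc]
        exact nnCoeff_mul hquad hrest

lemma choose_ineq {s t j n : ℕ} (hst : s ≤ t) (htj : t ≤ j) (hjn : j ≤ n) :
    j.choose t * n.choose s ≤ n.choose t * j.choose s := by
  have h1 := Nat.choose_mul (n := n) (k := t) hst
  have h2 := Nat.choose_mul (n := j) (k := t) hst
  have h3 : (j - s).choose (t - s) ≤ (n - s).choose (t - s) :=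
    Nat.choose_le_choose _ (by omega)
  have h4 : 0 < t.choose s := Nat.choose_pos hst
  refine Nat.le_of_mul_le_mul_right ?_ h4
  calc j.choose t * n.choose s * t.choose s = (j.choose t * t.choose s) * n.choose s := by ring
    _ = j.choose s * (j - s).choose (t - s) * n.choose s := by rw [h2]
    _ ≤ j.choose s * (n - s).choose (t - s) * n.choose s :=
        Nat.mul_le_mul_right _ (Nat.mul_le_mul_left _ h3)
    _ = (n.choose t * t.choose s) * j.choose s := by rw [h1]; ring
    _ = n.choose t * j.choose s * t.choose s := by ring

theorem ehrhart_coeff_ratio_le (n : ℕ) (a : ℝ) (ha : 0 < a) (P : Set (Fin n → ℝ))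
    (hP : IsLatticePolytope P) (hfull : (interior P).Nonempty)
    (L : Polynomial ℝ) (hL : IsEhrhartPoly P L) (hdeg : L.natDegree = n)
    (hroots : ∀ z ∈ (L.map (algebraMap ℝ ℂ)).roots, z.re = -1 / a)
    (s t : ℕ) (hst : s < t) (htn : t ≤ n) :
    L.coeff t / L.coeff s ≤ a ^ (t - s) * (n.choose t : ℝ) / (n.choose s : ℝ) := by
  have hb : (0 : ℝ) < 1 / a := by positivity
  set b : ℝ := 1 / a with hbdef
  have hn1 : 1 ≤ n := by omega
  have hL0 : L ≠ 0 := by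
    intro h; rw [h, natDegree_zero] at hdeg; omega
  -- leading coefficient is positive
  have hlead : L.leadingCoeff = L.coeff n := by rw [leadingCoeff, hdeg]
  have hc : 0 < L.coeff n := by
    rcases lt_or_ge 0 (L.coeff n) with h | h
    · exact h
    · exfalso
      have hdegpos : 0 < L.degree := natDegree_pos_iff_degree_pos.1 (by omega)
      have htb : Filter.Tendsto (fun x => L.eval x) Filter.atTop Filter.atBot :=
        L.tendsto_atBot_of_leadingCoeff_nonpos hdegpos (hlead ▸ h)
      have hev : ∀ᶠ x : ℝ in Filter.atTop, L.eval x < 0 :=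
        htb.eventually (Filter.eventually_lt_atBot 0)
      have hev2 : ∀ᶠ k : ℕ in Filter.atTop, L.eval (k : ℝ) < 0 :=
        (tendsto_natCast_atTop_atTop (R := ℝ)).eventually hev
      obtain ⟨k, hk1, hk2⟩ := (hev2.and (Filter.eventually_ge_atTop 1)).exists
      have := hL k hk2
      rw [this] at hk1
      exact absurd hk1 (not_lt.2 (by positivity))
  -- the shifted polynomial
  set Q : Polynomial ℝ := taylor (-b) L with hQdef
  have hQdeg : Q.natDegree = n := by rw [hQdef, natDegree_taylor, hdeg]
  have hLQ : L = taylor b Q := by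
    rw [hQdef, taylor_taylor, add_neg_cancel, taylor_zero]
  -- key coefficient expansion
  have key : ∀ u : ℕ, L.coeff u =
      ∑ j ∈ Finset.range (n + 1), Q.coeff j * (b ^ (j - u) * (j.choose u : ℝ)) := by
    intro u
    have hQsum : taylor b Q =
        ∑ j ∈ Finset.range (n + 1), C (Q.coeff j) * (X + C b) ^ j := by
      conv_lhs => rw [Q.as_sum_range' (n + 1) (by omega)]
      rw [map_sum]
      exact Finset.sum_congr rfl fun j _ => by rw [taylor_monomial]
    rw [hLQ, hQsum, finset_sum_coeff]
    exact Finset.sum_congr rfl fun j _ => by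
      rw [coeff_C_mul, coeff_X_add_C_pow]
  -- Q.coeff n = L.coeff n
  have hQn : Q.coeff n = L.coeff n := by
    rw [key n, Finset.sum_eq_single n]
    · simp
    · intro j hj hne
      have : j < n := by
        have := Finset.mem_range.1 hj; omega
      rw [Nat.choose_eq_zero_of_lt this]
      ring
    · intro h; exact absurd (Finset.self_mem_range_succ n) h
  -- nonnegativity of Q's coefficients
  have hQnonneg : ∀ k, 0 ≤ Q.coeff k := by
    set QC : Polynomial ℂ := Q.map (algebraMap ℝ ℂ) with hQCdef
    have hQ0 : Q ≠ 0 := fun h => by rw [h, natDegree_zero] at hQdeg; omega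
    have hLC0 : L.map (algebraMap ℝ ℂ) ≠ 0 := by
      simpa [Polynomial.map_eq_zero] using hL0
    have hcomp : QC = (L.map (algebraMap ℝ ℂ)).comp (X + C (algebraMap ℝ ℂ (-b))) := by
      rw [hQCdef, hQdef, taylor_apply, Polynomial.map_comp]
      simp
    have hroots0 : ∀ z ∈ QC.roots, z.re = 0 := by
      intro z hz
      have hzr : QC.IsRoot z := isRoot_of_mem_roots hz
      have heval : QC.eval z = (L.map (algebraMap ℝ ℂ)).eval (z + ((-b : ℝ) : ℂ)) := by
        rw [hcomp, eval_comp]; simp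
      have hmem : z + ((-b : ℝ) : ℂ) ∈ (L.map (algebraMap ℝ ℂ)).roots := by
        rw [mem_roots hLC0]
        rw [IsRoot, ← heval]
        exact hzr
      have hre := hroots _ hmem
      rw [Complex.add_re, Complex.ofReal_re, neg_div] at hre
      linarith
    have hQCstar : QC.map (starRingEnd ℂ) = QC := by
      rw [hQCdef, Polynomial.map_map]
      congr 1
      refine RingHom.ext fun x => ?_
      simp [Complex.conj_ofReal]
    have hstarroots : QC.roots.map (starRingEnd ℂ) = QC.roots := by
      have h := (IsAlgClosed.splits QC).roots_map (starRingEnd ℂ)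
      rw [hQCstar] at h
      exact h.symm
    have hfac := (IsAlgClosed.splits QC).eq_prod_roots
    have hNN := nnCoeff_prod QC.roots hstarroots hroots0
    have hQCdeg : QC.natDegree = n := by
      rw [hQCdef, natDegree_map, hQdeg]
    have hlc : QC.leadingCoeff = ((L.coeff n : ℝ) : ℂ) := by
      rw [leadingCoeff, hQCdeg, hQCdef, coeff_map, ← hQn]
      rfl
    intro k
    have h1 : QC.coeff k = ((Q.coeff k : ℝ) : ℂ) := coeff_map _ _
    have h2 : QC.coeff k =
        ((L.coeff n : ℝ) : ℂ) * ((QC.roots.map fun z => X - C z).prod.coeff k) := by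
      conv_lhs => rw [hfac]
      rw [coeff_C_mul, hlc]
    have h3 : Q.coeff k = L.coeff n * ((QC.roots.map fun z => X - C z).prod.coeff k).re := by
      have h4 := congrArg Complex.re (h1.symm.trans h2)
      simpa [Complex.mul_re] using h4
    rw [h3]
    exact mul_nonneg hc.le (hNN k).2
  -- positivity of L.coeff s
  have hterm_nonneg : ∀ u, ∀ j ∈ Finset.range (n + 1),
      0 ≤ Q.coeff j * (b ^ (j - u) * (j.choose u : ℝ)) := by
    intro u j _
    have := hQnonneg j
    positivity
  have hLs : 0 < L.coeff s := by
    rw [key s]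
    calc (0 : ℝ) < Q.coeff n * (b ^ (n - s) * (n.choose s : ℝ)) := by
          rw [hQn]
          have : (0 : ℝ) < (n.choose s : ℝ) := by
            exact_mod_cast Nat.choose_pos (le_trans (le_of_lt hst) htn)
          positivity
      _ ≤ _ := Finset.single_le_sum (hterm_nonneg s) (Finset.self_mem_range_succ n)
  have hcs : (0 : ℝ) < (n.choose s : ℝ) := by
    exact_mod_cast Nat.choose_pos (le_trans (le_of_lt hst) htn)
  rw [div_le_div_iff₀ hLs hcs, key t, key s, Finset.sum_mul, Finset.mul_sum]
  refine Finset.sum_le_sum fun j hj => ?_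
  have hjn : j ≤ n := by have := Finset.mem_range.1 hj; omega
  have hq := hQnonneg j
  rcases lt_or_ge j t with hjt | htj
  · rw [Nat.choose_eq_zero_of_lt hjt]
    have h1 : (0:ℝ) ≤ (n.choose t : ℝ) := by positivity
    have h2 : (0:ℝ) ≤ Q.coeff j * (b ^ (j - s) * (j.choose s : ℝ)) :=
      hterm_nonneg s j hj
    have h3 : (0:ℝ) ≤ a ^ (t - s) := by positivity
    simp only [Nat.cast_zero, mul_zero, zero_mul]
    positivity
  · -- t ≤ j
    have hpow : b ^ (j - s) = b ^ (t - s) * b ^ (j - t) := by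
      rw [← pow_add]; congr 1; omega
    have hab : a ^ (t - s) * b ^ (t - s) = 1 := by
      rw [← mul_pow, hbdef, mul_one_div_cancel (ne_of_gt ha), one_pow]
    have hchoose : (j.choose t : ℝ) * (n.choose s : ℝ) ≤ (n.choose t : ℝ) * (j.choose s : ℝ) := by
      exact_mod_cast choose_ineq (le_of_lt hst) htj hjn
    calc Q.coeff j * (b ^ (j - t) * (j.choose t : ℝ)) * (n.choose s : ℝ)
        = Q.coeff j * b ^ (j - t) * ((j.choose t : ℝ) * (n.choose s : ℝ)) := by ring
      _ ≤ Q.coeff j * b ^ (j - t) * ((n.choose t : ℝ) * (j.choose s : ℝ)) := by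
          apply mul_le_mul_of_nonneg_left hchoose
          positivity
      _ = a ^ (t - s) * (n.choose t : ℝ) * (Q.coeff j * (b ^ (j - s) * (j.choose s : ℝ))) := by
          rw [hpow]
          calc Q.coeff j * b ^ (j - t) * ((n.choose t : ℝ) * (j.choose s : ℝ))
              = (a ^ (t-s) * b ^ (t-s)) * (Q.coeff j * b ^ (j - t) * ((n.choose t : ℝ) * (j.choose s : ℝ))) := by
                rw [hab, one_mul]
            _ = _ := by ring
end

section
/- Let a > 0 be a real number and let P ⊂ ℝ^n be an n-dimensional lattice polytope such that all n complex roots of its Ehrhart polynomial L_P have real part equal to -1/a. Then the inequality ℓ_t(P)/ℓ_s(P) ≤ a^{t-s} binom(n,t)/binom(n,s) holds with equality for (s,t) = (n-1,n); that is, a · ℓ_{n-1}(P) = n · vol(P). -/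
open MeasureTheory Polynomial Pointwise

open scoped ENNReal

lemma coeff_rel (n : ℕ) (hn : 1 ≤ n) (a : ℝ) (ha : 0 < a) (L : Polynomial ℝ)
    (hdeg : L.natDegree = n)
    (hroots : ∀ z ∈ (L.map (algebraMap ℝ ℂ)).roots, z.re = -1 / a) :
    L.coeff (n - 1) = (n / a) * L.coeff n := by
  have hL0 : L ≠ 0 := by rintro rfl; simp at hdeg; omega
  set M := L.map (algebraMap ℝ ℂ) with hM
  have hM0 : M ≠ 0 := by simpa [hM, Polynomial.map_eq_zero] using hL0
  have hMdeg : M.natDegree = n := by rw [hM, natDegree_map]; exact hdeg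
  have hlc : M.leadingCoeff ≠ 0 := leadingCoeff_ne_zero.mpr hM0
  set M' := M * C M.leadingCoeff⁻¹ with hM'
  have hmonic : M'.Monic := monic_mul_leadingCoeff_inv hM0
  have hsplit : Splits M' := IsAlgClosed.splits M'
  have hroots' : M'.roots = M.roots := by
    rw [hM', mul_comm]; exact roots_C_mul M (inv_ne_zero hlc)
  have hdeg' : M'.natDegree = n := by
    rw [hM', natDegree_mul hM0 (by simp [hlc]), natDegree_C, hMdeg, add_zero]
  have hcard : Multiset.card M'.roots = n := by
    rw [← hdeg']; exact splits_iff_card_roots.mp hsplit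
  have hsum : M'.nextCoeff = -M'.roots.sum :=
    hsplit.nextCoeff_eq_neg_sum_roots_of_monic hmonic
  have hrepl : M'.roots.map Complex.re = Multiset.replicate n (-1 / a) := by
    rw [Multiset.eq_replicate]
    constructor
    · simpa using hcard
    · intro b hb
      obtain ⟨z, hz, rfl⟩ := Multiset.mem_map.mp hb
      exact hroots z (hroots' ▸ hz)
  have hre : (M'.roots.sum).re = n * (-1 / a) := by
    have h1 := map_multiset_sum Complex.reAddGroupHom M'.roots
    simp only [Complex.reAddGroupHom, AddMonoidHom.coe_mk, ZeroHom.coe_mk] at h1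
    rw [h1, show (Multiset.map (fun x => x.re) M'.roots) = _ from hrepl,
      Multiset.sum_replicate, nsmul_eq_mul]
  have hnext : M'.nextCoeff = M'.coeff (n - 1) := by
    rw [nextCoeff_of_natDegree_pos (by omega : 0 < M'.natDegree), hdeg']
  have hcoeff' : M'.coeff (n - 1) = (L.coeff (n-1) : ℂ) * (L.coeff n : ℂ)⁻¹ := by
    rw [hM', coeff_mul_C]
    congr 1
    · rw [hM, coeff_map]; rfl
    · congr 1
      rw [leadingCoeff, hMdeg, hM, coeff_map]; rfl
  have hcn : L.coeff n ≠ 0 := by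
    have := leadingCoeff_ne_zero.mpr hL0
    rwa [leadingCoeff, hdeg] at this
  -- conclude
  have key : ((L.coeff (n-1) / L.coeff n : ℝ) : ℂ) = -M'.roots.sum := by
    push_cast
    rw [div_eq_mul_inv, ← hcoeff', ← hnext, hsum]
  have key2 : L.coeff (n-1) / L.coeff n = n / a := by
    have := congrArg Complex.re key
    simp only [Complex.ofReal_re, Complex.neg_re, hre] at this
    rw [this]; ring
  field_simp at key2 ⊢
  linarith [key2]



variable {n : ℕ}

def cube (v : Fin n → ℤ) : Set (Fin n → ℝ) :=
  Set.univ.pi fun i => Set.Ico (v i : ℝ) (v i + 1)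

lemma volume_cube (v : Fin n → ℤ) : volume (cube v) = 1 := by
  rw [cube, volume_pi_pi]
  simp [Real.volume_Ico]

lemma measurable_cube (v : Fin n → ℤ) : MeasurableSet (cube v) :=
  MeasurableSet.univ_pi fun i => measurableSet_Ico

lemma cube_disjoint {v w : Fin n → ℤ} (h : v ≠ w) : Disjoint (cube v) (cube w) := by
  rw [Set.disjoint_left]
  rintro x hx hx'
  apply h
  funext i
  have h1 := hx i (Set.mem_univ i)
  have h2 := hx' i (Set.mem_univ i)
  simp only [Set.mem_Ico] at h1 h2
  have : (v i : ℝ) < w i + 1 := lt_of_le_of_lt h1.1 h2.2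
  have : (w i : ℝ) < v i + 1 := lt_of_le_of_lt h2.1 h1.2
  have b1 : v i < w i + 1 := by exact_mod_cast ‹(v i : ℝ) < w i + 1›
  have b2 : w i < v i + 1 := by exact_mod_cast this
  omega

lemma mem_cube_floor (x : Fin n → ℝ) : x ∈ cube (fun i => ⌊x i⌋) := by
  intro i _
  exact ⟨Int.floor_le _, Int.lt_floor_add_one _⟩

lemma norm_sub_le_of_mem_cube {x : Fin n → ℝ} {v : Fin n → ℤ} (h : x ∈ cube v) :
    ‖x - fun i => (v i : ℝ)‖ ≤ 1 := by
  rw [pi_norm_le_iff_of_nonneg zero_le_one]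
  intro i
  have := h i (Set.mem_univ i)
  simp only [Set.mem_Ico] at this
  rw [Pi.sub_apply, Real.norm_eq_abs, abs_le]
  constructor <;> [linarith [this.1]; linarith [this.2]]

lemma lattice_set_finite {Q : Set (Fin n → ℝ)} (hQ : Bornology.IsBounded Q) :
    {v : Fin n → ℤ | (fun i => (v i : ℝ)) ∈ Q}.Finite := by
  obtain ⟨R, hR⟩ := hQ.subset_closedBall 0
  have : {v : Fin n → ℤ | (fun i => (v i : ℝ)) ∈ Q} ⊆
      Set.univ.pi fun _ : Fin n => Set.Icc (-⌈R⌉) ⌈R⌉ := by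
    intro v hv i _
    have h1 : (fun i => (v i : ℝ)) ∈ Metric.closedBall 0 R := hR hv
    rw [Metric.mem_closedBall, dist_zero_right] at h1
    have hR0 : (0:ℝ) ≤ R := le_trans (norm_nonneg _) h1
    rw [pi_norm_le_iff_of_nonneg hR0] at h1
    have h2 : |(v i : ℝ)| ≤ R := h1 i
    have h3 : ((⌈R⌉ : ℤ) : ℝ) ≥ R := Int.le_ceil R
    rw [abs_le] at h2
    constructor
    · have : (-⌈R⌉ : ℝ) ≤ (v i : ℝ) := by push_cast; linarith [h2.1]
      exact_mod_cast this
    · have : ((v i : ℝ)) ≤ (⌈R⌉ : ℝ) := by linarith [h2.2]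
      exact_mod_cast this
  exact Set.Finite.subset (Set.Finite.pi fun _ => Set.finite_Icc _ _) this

lemma volume_union_cubes {Q : Set (Fin n → ℝ)} (hQ : Bornology.IsBounded Q) :
    volume (⋃ v ∈ {v : Fin n → ℤ | (fun i => (v i : ℝ)) ∈ Q}, cube v) =
      (latticePointCount Q : ℝ≥0∞) := by
  have hfin := lattice_set_finite hQ
  classical
  rw [show (⋃ v ∈ {v : Fin n → ℤ | (fun i => (v i : ℝ)) ∈ Q}, cube v)
      = ⋃ v ∈ hfin.toFinset, cube v by simp]
  rw [measure_biUnion_finset (fun v _ w _ hvw => cube_disjoint hvw)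
    (fun v _ => measurable_cube v)]
  simp only [volume_cube, Finset.sum_const, nsmul_eq_mul, mul_one]
  rw [latticePointCount, Set.ncard_eq_toFinset_card _ hfin]

lemma outer_subset {P : Set (Fin n → ℝ)} (hP : Convex ℝ P) {x0 : Fin n → ℝ} {r : ℝ}
    (hr : 0 < r) (hball : Metric.closedBall x0 r ⊆ P) {k : ℝ} (hk : 0 < k) :
    k • P + Metric.closedBall (0 : Fin n → ℝ) 1 ⊆
      (k • x0 - (k + 1/r) • x0) +ᵥ (k + 1/r) • P := by
  rintro y ⟨-, ⟨p, hp, rfl⟩, e, he, rfl⟩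
  have hs : (0:ℝ) < k + 1/r := by positivity
  have hq : x0 + r • e ∈ P := by
    apply hball
    rw [Metric.mem_closedBall, dist_eq_norm]
    simp only [add_sub_cancel_left, norm_smul, Real.norm_eq_abs, abs_of_pos hr]
    rw [Metric.mem_closedBall, dist_zero_right] at he
    nlinarith
  have hmem : (k/(k+1/r)) • p + (1/(r*(k+1/r))) • (x0 + r • e) ∈ P := by
    apply hP hp hq (by positivity) (by positivity)
    field_simp
  refine ⟨(k + 1/r) • ((k/(k+1/r)) • p + (1/(r*(k+1/r))) • (x0 + r • e)),
    Set.smul_mem_smul_set hmem, ?_⟩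
  show (k • x0 - (k + 1/r) • x0) + _ = _
  match_scalars <;> field_simp <;> ring

lemma inner_subset {P : Set (Fin n → ℝ)} (hP : Convex ℝ P) {x0 : Fin n → ℝ} {r : ℝ}
    (hr : 0 < r) (hball : Metric.closedBall x0 r ⊆ P) {k : ℝ} (hk : 1/r < k) :
    (k • x0 - (k - 1/r) • x0) +ᵥ (k - 1/r) • P ⊆
      {x | Metric.closedBall x 1 ⊆ k • P} := by
  rintro x ⟨-, ⟨p, hp, rfl⟩, rfl⟩
  intro y hy
  have hk0 : (0:ℝ) < k := lt_trans (by positivity) hk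
  set x := (k • x0 - (k - 1/r) • x0) + (k - 1/r) • p with hx
  set e := y - x with he
  have hee : ‖e‖ ≤ 1 := by
    rw [he]
    rw [Metric.mem_closedBall, dist_eq_norm] at hy
    exact hy
  have hq : x0 + r • e ∈ P := by
    apply hball
    rw [Metric.mem_closedBall, dist_eq_norm]
    simp only [add_sub_cancel_left, norm_smul, Real.norm_eq_abs, abs_of_pos hr]
    nlinarith
  have hmem : ((k-1/r)/k) • p + (1/(k*r)) • (x0 + r • e) ∈ P := by
    apply hP hp hq (div_nonneg (by linarith) hk0.le) (by positivity)
    field_simp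
    ring
  refine ⟨((k-1/r)/k) • p + (1/(k*r)) • (x0 + r • e), hmem, ?_⟩
  show k • _ = y
  have : y = x + e := by rw [he]; abel
  rw [this, hx]
  match_scalars <;> field_simp <;> ring

lemma vol_vadd_smul (c : Fin n → ℝ) {s : ℝ} (hs : 0 ≤ s) (P : Set (Fin n → ℝ)) :
    volume (c +ᵥ s • P) = ENNReal.ofReal (s ^ n) * volume P := by
  rw [measure_vadd, Measure.addHaar_smul_of_nonneg volume hs]
  congr
  simp [Module.finrank_pi]

lemma count_bounds {P : Set (Fin n → ℝ)} (hP : Convex ℝ P) (hPb : Bornology.IsBounded P)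
    {x0 : Fin n → ℝ} {r : ℝ} (hr : 0 < r) (hball : Metric.closedBall x0 r ⊆ P)
    {k : ℝ} (hk : 1/r < k) :
    ENNReal.ofReal ((k - 1/r) ^ n) * volume P ≤ (latticePointCount (k • P) : ℝ≥0∞) ∧
    (latticePointCount (k • P) : ℝ≥0∞) ≤ ENNReal.ofReal ((k + 1/r) ^ n) * volume P := by
  have hk0 : (0:ℝ) < k := lt_trans (by positivity) hk
  have hQb : Bornology.IsBounded (k • P) := hPb.smul₀ k
  set S := {v : Fin n → ℤ | (fun i => (v i : ℝ)) ∈ k • P} with hS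
  set A := ⋃ v ∈ S, cube v with hA
  have hvolA : volume A = (latticePointCount (k • P) : ℝ≥0∞) := volume_union_cubes hQb
  constructor
  · -- lower bound
    rw [← hvolA, ← vol_vadd_smul (k • x0 - (k - 1/r) • x0) (by linarith) P]
    apply measure_mono
    intro x hx
    have hx' : Metric.closedBall x 1 ⊆ k • P := inner_subset hP hr hball hk hx
    have hv : (fun i => ((⌊x i⌋ : ℤ) : ℝ)) ∈ k • P := by
      apply hx'
      rw [Metric.mem_closedBall, dist_eq_norm, ← norm_neg]
      have := norm_sub_le_of_mem_cube (mem_cube_floor x)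
      simpa [neg_sub] using this
    exact Set.mem_biUnion hv (mem_cube_floor x)
  · -- upper bound
    rw [← hvolA]
    calc volume A ≤ volume (k • P + Metric.closedBall (0 : Fin n → ℝ) 1) := by
          apply measure_mono
          intro x hx
          obtain ⟨v, hv, hxv⟩ := Set.mem_iUnion₂.mp hx
          exact ⟨(fun i => (v i : ℝ)), hv, x - fun i => (v i : ℝ),
            by simpa [Metric.mem_closedBall, dist_zero_right] using
              norm_sub_le_of_mem_cube hxv, by module⟩
      _ ≤ volume ((k • x0 - (k + 1/r) • x0) +ᵥ (k + 1/r) • P) :=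
          measure_mono (outer_subset hP hr hball hk0)
      _ = ENNReal.ofReal ((k + 1/r) ^ n) * volume P :=
          vol_vadd_smul _ (by positivity) P

open Polynomial Filter in
lemma tendsto_eval_div_pow (L : Polynomial ℝ) (hdeg : L.natDegree = n) (hL : L ≠ 0) :
    Tendsto (fun x : ℝ => L.eval x / x ^ n) atTop (nhds (L.coeff n)) := by
  have hc : L.coeff n = L.leadingCoeff := by rw [leadingCoeff, hdeg]
  have hequiv := Polynomial.isEquivalent_atTop_lead L
  rw [Asymptotics.isEquivalent_iff_tendsto_one ?hz] at hequiv
  case hz =>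
    filter_upwards [eventually_gt_atTop 0] with x hx
    exact mul_ne_zero (leadingCoeff_ne_zero.mpr hL) (by positivity)
  have h2 : Tendsto (fun x : ℝ => (L.eval x / (L.leadingCoeff * x ^ L.natDegree)) * L.leadingCoeff)
      atTop (nhds (1 * L.leadingCoeff)) := hequiv.mul_const _
  rw [one_mul] at h2
  rw [hc]
  apply h2.congr'
  filter_upwards [eventually_gt_atTop 0] with x hx
  rw [hdeg]
  field_simp
  rw [mul_div_cancel_right₀ _ (leadingCoeff_ne_zero.mpr hL)]

open Polynomial Filter in
lemma leading_eq_volume {P : Set (Fin n → ℝ)} (hP : Convex ℝ P) (hPb : Bornology.IsBounded P)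
    {x0 : Fin n → ℝ} {r : ℝ} (hr : 0 < r) (hball : Metric.closedBall x0 r ⊆ P)
    (L : Polynomial ℝ) (hL0 : L ≠ 0)
    (hL : ∀ k : ℕ, 0 < k → L.eval (k : ℝ) = latticePointCount ((k : ℝ) • P))
    (hdeg : L.natDegree = n) :
    L.coeff n = (volume P).toReal := by
  set V := (volume P).toReal with hV
  have hVfin : volume P ≠ ⊤ := by
    obtain ⟨R, hR⟩ := hPb.subset_closedBall 0
    exact ne_top_of_le_ne_top (measure_closedBall_lt_top).ne (measure_mono hR)
  have hc0 : (0:ℝ) < 1 / r := by positivity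
  set f : ℕ → ℝ := fun k => (latticePointCount ((k : ℝ) • P) : ℝ) / (k : ℝ) ^ n with hf
  -- f tends to L.coeff n
  have h1 : Tendsto f atTop (nhds (L.coeff n)) := by
    have := (tendsto_eval_div_pow L hdeg hL0).comp tendsto_natCast_atTop_atTop
    apply this.congr'
    filter_upwards [eventually_gt_atTop 0] with k hk
    simp only [Function.comp_apply, hf, hL k hk]
  -- f tends to V
  have h2 : Tendsto f atTop (nhds V) := by
    have hz : Tendsto (fun k : ℕ => 1 / r / (k : ℝ)) atTop (nhds 0) :=
      tendsto_const_div_atTop_nhds_zero_nat _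
    have hone : Tendsto (fun _ : ℕ => (1:ℝ)) atTop (nhds 1) := tendsto_const_nhds
    have hg : Tendsto (fun k : ℕ => (1 - 1 / r / (k : ℝ)) ^ n * V) atTop (nhds V) := by
      have := ((hone.sub hz).pow n).mul_const V
      simpa using this
    have hh : Tendsto (fun k : ℕ => (1 + 1 / r / (k : ℝ)) ^ n * V) atTop (nhds V) := by
      have := ((hone.add hz).pow n).mul_const V
      simpa using this
    apply tendsto_of_tendsto_of_tendsto_of_le_of_le' hg hh
    · -- lower ≤ f eventually
      filter_upwards [eventually_gt_atTop (⌈1/r⌉₊)] with k hk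
      have hkc : 1 / r < (k : ℝ) := lt_of_le_of_lt (Nat.le_ceil _) (by exact_mod_cast hk)
      have hk0 : (0:ℝ) < k := lt_trans hc0 hkc
      have hb := (count_bounds hP hPb hr hball hkc).1
      have hreal : ((k:ℝ) - 1/r) ^ n * V ≤ (latticePointCount ((k:ℝ) • P) : ℝ) := by
        have h3 := ENNReal.toReal_mono (ENNReal.natCast_ne_top _) hb
        rwa [ENNReal.toReal_mul, ENNReal.toReal_ofReal (pow_nonneg (by linarith) n),
          ENNReal.toReal_natCast] at h3
      rw [hf]
      rw [show (1 - 1/r / (k:ℝ)) = ((k:ℝ) - 1/r)/(k:ℝ) by field_simp]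
      rw [div_pow, div_mul_eq_mul_div]
      exact div_le_div_of_nonneg_right hreal (by positivity) |>.trans_eq rfl
    · filter_upwards [eventually_gt_atTop (⌈1/r⌉₊)] with k hk
      have hkc : 1 / r < (k : ℝ) := lt_of_le_of_lt (Nat.le_ceil _) (by exact_mod_cast hk)
      have hk0 : (0:ℝ) < k := lt_trans hc0 hkc
      have hb := (count_bounds hP hPb hr hball hkc).2
      have hreal : (latticePointCount ((k:ℝ) • P) : ℝ) ≤ ((k:ℝ) + 1/r) ^ n * V := by
        have h3 := ENNReal.toReal_mono (ENNReal.mul_ne_top ENNReal.ofReal_ne_top hVfin) hb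
        rwa [ENNReal.toReal_mul, ENNReal.toReal_ofReal (by positivity),
          ENNReal.toReal_natCast] at h3
      rw [hf]
      rw [show (1 + 1/r / (k:ℝ)) = ((k:ℝ) + 1/r)/(k:ℝ) by field_simp]
      rw [div_pow, div_mul_eq_mul_div]
      exact div_le_div_of_nonneg_right hreal (by positivity) |>.trans_eq rfl
  exact tendsto_nhds_unique h1 h2

theorem ehrhart_coeff_ratio_eq_top (n : ℕ) (hn : 1 ≤ n) (a : ℝ) (ha : 0 < a)
    (P : Set (Fin n → ℝ))
    (hP : IsLatticePolytope P) (hfull : (interior P).Nonempty)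
    (L : Polynomial ℝ) (hL : IsEhrhartPoly P L) (hdeg : L.natDegree = n)
    (hroots : ∀ z ∈ (L.map (algebraMap ℝ ℂ)).roots, z.re = -1 / a) :
    L.coeff n / L.coeff (n - 1) =
      a ^ (n - (n - 1)) * (n.choose n : ℝ) / (n.choose (n - 1) : ℝ) ∧
    a * L.coeff (n - 1) = (n : ℝ) * (volume P).toReal := by
  obtain ⟨Vs, hPeq⟩ := hP
  have hconv : Convex ℝ P := hPeq ▸ convex_convexHull ℝ _
  have hcomp : IsCompact P := hPeq ▸ Set.Finite.isCompact_convexHull (𝕜 := ℝ) ((Vs.finite_toSet).image _)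
  have hPb : Bornology.IsBounded P := hcomp.isBounded
  obtain ⟨x0, hx0⟩ := hfull
  obtain ⟨ε, hε, hballε⟩ := Metric.isOpen_iff.mp isOpen_interior x0 hx0
  have hball : Metric.closedBall x0 (ε/2) ⊆ P :=
    (Metric.closedBall_subset_ball (by linarith)).trans (hballε.trans interior_subset)
  have hL0 : L ≠ 0 := by rintro rfl; simp at hdeg; omega
  have hcvol : L.coeff n = (volume P).toReal :=
    leading_eq_volume hconv hPb (by linarith : (0:ℝ) < ε/2) hball L hL0 hL hdeg
  have hcrel : L.coeff (n - 1) = ((n : ℝ) / a) * L.coeff n := coeff_rel n hn a ha L hdeg hroots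
  have hcn : L.coeff n ≠ 0 := by
    have := Polynomial.leadingCoeff_ne_zero.mpr hL0
    rwa [Polynomial.leadingCoeff, hdeg] at this
  have hn0 : (n : ℝ) ≠ 0 := by positivity
  constructor
  · have hch : n.choose (n-1) = n := by rw [Nat.choose_symm hn, Nat.choose_one_right]
    rw [hcrel, show n - (n - 1) = 1 by omega, Nat.choose_self, hch]
    field_simp
    ring
  · rw [hcrel, hcvol]
    field_simp
end
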